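/- arXiv:2104.13089 — 2 statements merged into one kernel-verified Lean document; each statement's English description precedes it below -/
import Mathlib

section
/- Let $n,r,k,t$ be positive integers with $n\ge r\ge t+1$ and $k\ge2$. Suppose $\mathcal{F}\subset\mathcal{L}_{n,r,k}$ is a maximal $t$-intersecting family with $\tau_t(\mathcal{F})=t+1$, let $\mathcal{T}$ be the set of its $t$-covers of size $t+1$, assume $|\mathcal{T}|\ge2$, $\mathcal{T}$ has a $t$-cover of size $t$, and $|\bigcup_{T\in\mathcal{T}}T|=t+2$. Then $|\mathcal{F}|\le 2\binom{n-t-1}{r-t-1}k^{r-t-1}+(r-1)(r-t+1)\binom{n-t-2}{r-t-2}k^{r-t-2}$. -/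
open Finset

attribute [local instance] Classical.propDecidable

/-- The ground set `[n] × [k]`. -/
def box (n k : ℕ) : Finset (ℕ × ℕ) := Finset.Icc 1 n ×ˢ Finset.Icc 1 k

/-- A `k`-signed set on `[n]`: a subset of `[n] × [k]` with pairwise distinct first coordinates. -/
def IsSigned (n k : ℕ) (T : Finset (ℕ × ℕ)) : Prop :=
  T ⊆ box n k ∧ (T.image Prod.fst).card = T.card

/-- `L n r k`: the collection of `k`-signed `r`-sets on `[n]`. -/
def L (n r k : ℕ) : Finset (Finset (ℕ × ℕ)) :=
  (box n k).powerset.filter (fun F => F.card = r ∧ (F.image Prod.fst).card = r)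

/-- A family is `t`-intersecting if any two members meet in at least `t` elements. -/
def IsTIntersecting (t : ℕ) (F : Finset (Finset (ℕ × ℕ))) : Prop :=
  ∀ A ∈ F, ∀ B ∈ F, t ≤ (A ∩ B).card

/-- `T` is a `t`-cover of the family `F`: a `k`-signed set meeting every member in ≥ `t` points. -/
def IsTCover (n k t : ℕ) (F : Finset (Finset (ℕ × ℕ))) (T : Finset (ℕ × ℕ)) : Prop :=
  IsSigned n k T ∧ ∀ A ∈ F, t ≤ (T ∩ A).card

/-- `F` is a maximal `t`-intersecting subfamily of `L n r k`. -/
def IsMaximalTIntersecting (n r k t : ℕ) (F : Finset (Finset (ℕ × ℕ))) : Prop :=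
  F ⊆ L n r k ∧ IsTIntersecting t F ∧
    ∀ G ⊆ L n r k, IsTIntersecting t G → F ⊆ G → G = F

/-- A `t`-intersecting family is trivial if all members contain a fixed `k`-signed `t`-set. -/
def IsTrivial (n k t : ℕ) (F : Finset (Finset (ℕ × ℕ))) : Prop :=
  ∃ T, IsSigned n k T ∧ T.card = t ∧ ∀ A ∈ F, T ⊆ A

/-- `Msig d = {(1,1),(2,1),…,(d,1)}`. -/
def Msig (d : ℕ) : Finset (ℕ × ℕ) := (Finset.Icc 1 d).image (fun x => (x, 1))

/-- The family `H₁(n,r,k,ℓ,t)`. -/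
def H1 (n r k l t : ℕ) : Finset (Finset (ℕ × ℕ)) :=
  (L n r k).filter (fun F =>
    (Msig t ⊆ F ∧ t + 1 ≤ (F ∩ Msig l).card) ∨
    (¬ Msig t ⊆ F ∧ (F ∩ Msig l).card = l - 1))

/-- The family `H₂(n,r,k,c,t)`. -/
def H2 (n r k c t : ℕ) : Finset (Finset (ℕ × ℕ)) :=
  (L n r k).filter (fun F =>
    (Msig t ⊆ F ∧ t + 1 ≤ (F ∩ Msig r).card) ∨
    (F ∩ Msig r = Msig t ∧ Msig c \ Msig r ⊆ F) ∨
    (¬ Msig t ⊆ F ∧ (F ∩ Msig r).card = r - 1 ∧ (F ∩ (Msig c \ Msig r)).card = 1))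

/-- The set of all `t`-covers of `F` of size `t+1`. -/
noncomputable def TauSet (n k t : ℕ) (F : Finset (Finset (ℕ × ℕ))) : Finset (Finset (ℕ × ℕ)) :=
  (box n k).powerset.filter (fun T => IsTCover n k t F T ∧ T.card = t + 1)

lemma fiber_eq (G : Finset (ℕ × ℕ)) (h : Set.InjOn Prod.fst (G : Set (ℕ × ℕ)))
    {p : ℕ × ℕ} (hp : p ∈ G) : G.filter (fun q => q.1 = p.1) = {p} := by
  ext q
  simp only [mem_filter, mem_singleton]
  constructor
  · rintro ⟨hq, hq1⟩; exact h hq hp hq1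
  · rintro rfl; exact ⟨hp, rfl⟩

lemma countB (s : Finset ℕ) (j k : ℕ) :
    (((s ×ˢ Finset.Icc 1 k).powerset).filter
      (fun G => G.card = j ∧ (G.image Prod.fst).card = j)).card ≤ s.card.choose j * k ^ j := by
  classical
  set Tgt := (s.powersetCard j).sigma (fun A => A.pi (fun _ => Finset.Icc 1 k)) with hTgt
  have hcardT : Tgt.card = s.card.choose j * k ^ j := by
    rw [hTgt, card_sigma]
    have h1 : ∀ A ∈ s.powersetCard j,
        (A.pi (fun _ => Finset.Icc 1 k)).card = k ^ j := by
      intro A hA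
      rw [Finset.card_pi]
      simp only [Nat.card_Icc, Nat.add_sub_cancel]
      rw [prod_const]
      congr 1
      exact (mem_powersetCard.1 hA).2
    rw [Finset.sum_congr rfl h1, sum_const, card_powersetCard, smul_eq_mul]
  rw [← hcardT]
  have hdec : ∀ G : Finset (ℕ × ℕ), Set.InjOn Prod.fst (G : Set (ℕ × ℕ)) →
      ((G.image Prod.fst).attach.image
        (fun a => (a.1, (G.filter (fun p => p.1 = a.1)).sum Prod.snd))) = G := by
    intro G hinj
    ext p
    simp only [mem_image, mem_attach, true_and, Subtype.exists]
    constructor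
    · rintro ⟨a, ha, rfl⟩
      obtain ⟨q, hq, rfl⟩ := ha
      rw [fiber_eq G hinj hq, sum_singleton]
      exact hq
    · intro hp
      refine ⟨p.1, ⟨p, hp, rfl⟩, ?_⟩
      rw [fiber_eq G hinj hp, sum_singleton]
  apply Finset.card_le_card_of_surjOn
    (fun x : (A : Finset ℕ) × (∀ a ∈ A, ℕ) =>
      x.1.attach.image (fun a => (a.1, x.2 a.1 a.2)))
  intro G hG
  simp only [mem_coe, mem_filter, mem_powerset] at hG
  obtain ⟨hGs, hGj, hGi⟩ := hG
  have hinj : Set.InjOn Prod.fst (G : Set (ℕ × ℕ)) := by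
    rw [← Finset.card_image_iff, hGi, hGj]
  refine ⟨⟨G.image Prod.fst, fun a _ => (G.filter (fun p => p.1 = a)).sum Prod.snd⟩, ?_, ?_⟩
  · simp only [hTgt, mem_coe, Finset.mem_sigma, mem_powersetCard, Finset.mem_pi]
    refine ⟨⟨?_, hGi⟩, ?_⟩
    · intro a ha
      obtain ⟨p, hp, rfl⟩ := mem_image.1 ha
      exact (mem_product.1 (hGs hp)).1
    · intro a ha
      obtain ⟨p, hp, rfl⟩ := mem_image.1 ha
      rw [fiber_eq G hinj hp, sum_singleton]
      exact (mem_product.1 (hGs hp)).2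
  · exact hdec G hinj

lemma mem_L {n r k : ℕ} {A : Finset (ℕ × ℕ)} :
    A ∈ L n r k ↔ A ⊆ box n k ∧ A.card = r ∧ (A.image Prod.fst).card = r := by
  simp [L, mem_filter, mem_powerset, and_assoc]

lemma injOn_of_mem_L {n r k : ℕ} {A : Finset (ℕ × ℕ)} (hA : A ∈ L n r k) :
    Set.InjOn Prod.fst (A : Set (ℕ × ℕ)) := by
  rw [← Finset.card_image_iff, (mem_L.1 hA).2.2, (mem_L.1 hA).2.1]

lemma signed_subset {n r k : ℕ} {A B : Finset (ℕ × ℕ)} (hA : A ∈ L n r k) (hBA : B ⊆ A) :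
    IsSigned n k B := by
  refine ⟨hBA.trans (mem_L.1 hA).1, ?_⟩
  exact card_image_of_injOn ((injOn_of_mem_L hA).mono (by exact_mod_cast hBA))

lemma countA (n r k : ℕ) (B : Finset (ℕ × ℕ)) :
    ((L n r k).filter (fun F => B ⊆ F)).card ≤
      (n - B.card).choose (r - B.card) * k ^ (r - B.card) := by
  rcases ((L n r k).filter (fun F => B ⊆ F)).eq_empty_or_nonempty with he | hne
  · rw [he]; simp
  · obtain ⟨F0, hF0⟩ := hne
    simp only [mem_filter] at hF0
    obtain ⟨hF0L, hBF0⟩ := hF0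
    obtain ⟨hsub, hcard, him⟩ := mem_L.1 hF0L
    have hinjF0 := injOn_of_mem_L hF0L
    have hBim : (B.image Prod.fst).card = B.card :=
      card_image_of_injOn (hinjF0.mono (by exact_mod_cast hBF0))
    set s : Finset ℕ := Finset.Icc 1 n \ B.image Prod.fst with hs
    have hims : B.image Prod.fst ⊆ Finset.Icc 1 n := by
      intro a ha
      obtain ⟨p, hp, rfl⟩ := mem_image.1 ha
      exact (mem_product.1 (hsub (hBF0 hp))).1
    have hscard : s.card = n - B.card := by
      rw [hs, card_sdiff_of_subset hims, Nat.card_Icc, hBim]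
      omega
    calc ((L n r k).filter (fun F => B ⊆ F)).card
        ≤ (((s ×ˢ Finset.Icc 1 k).powerset).filter
            (fun G => G.card = r - B.card ∧ (G.image Prod.fst).card = r - B.card)).card := by
          apply Finset.card_le_card_of_injOn (fun F => F \ B)
          · intro A hA
            simp only [mem_coe, mem_filter] at hA
            obtain ⟨hAL, hBA⟩ := hA
            obtain ⟨hAsub, hAcard, hAim⟩ := mem_L.1 hAL
            have hinjA := injOn_of_mem_L hAL
            simp only [mem_coe, mem_filter, mem_powerset]
            have hcs : (A \ B).card = r - B.card := by rw [card_sdiff_of_subset hBA, hAcard]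
            refine ⟨?_, hcs, ?_⟩
            · intro p hp
              obtain ⟨hpA, hpB⟩ := mem_sdiff.1 hp
              have hpbox := mem_product.1 (hAsub hpA)
              rw [mem_product]
              refine ⟨mem_sdiff.2 ⟨hpbox.1, ?_⟩, hpbox.2⟩
              intro hpim
              obtain ⟨q, hq, hq1⟩ := mem_image.1 hpim
              exact hpB (by rwa [← hinjA (by exact_mod_cast hBA hq) (by exact_mod_cast hpA) hq1])
            · rw [← hcs]
              exact card_image_of_injOn (hinjA.mono (by exact_mod_cast sdiff_subset))
          · intro A hA A' hA' heq
            simp only [mem_coe, mem_filter] at hA hA'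
            have : A \ B ∪ B = A' \ B ∪ B := by simp only at heq; rw [heq]
            rwa [sdiff_union_of_subset hA.2, sdiff_union_of_subset hA'.2] at this
      _ ≤ s.card.choose (r - B.card) * k ^ (r - B.card) := countB s (r - B.card) k
      _ = (n - B.card).choose (r - B.card) * k ^ (r - B.card) := by rw [hscard]


theorem bound_ell_t_plus_two (n r k t : ℕ) (hn : 0 < n) (ht : 0 < t)
    (hk : 2 ≤ k) (htr : t + 1 ≤ r) (hrn : r ≤ n)
    (F : Finset (Finset (ℕ × ℕ))) (hF : IsMaximalTIntersecting n r k t F)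
    (hex : ∃ T, IsTCover n k t F T ∧ T.card = t + 1)
    (hmin : ∀ T, IsTCover n k t F T → t + 1 ≤ T.card)
    (hcard : 2 ≤ (TauSet n k t F).card)
    (hS : ∃ S, IsTCover n k t (TauSet n k t F) S ∧ S.card = t)
    (hM : ((TauSet n k t F).sup id).card = t + 2) :
    F.card ≤ 2 * (n - t - 1).choose (r - t - 1) * k ^ (r - t - 1) +
      (r - 1) * (r - t + 1) * (n - t - 2).choose (r - t - 2) * k ^ (r - t - 2) := by
  classical
  obtain ⟨S, hScov, hScard⟩ := hS
  have hmem𝒯 : ∀ T, T ∈ TauSet n k t F ↔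
      T ⊆ box n k ∧ IsTCover n k t F T ∧ T.card = t + 1 := by
    intro T
    simp [TauSet, mem_filter, mem_powerset, and_assoc]
  have hST : ∀ T ∈ TauSet n k t F, S ⊆ T := by
    intro T hT
    have h1 : t ≤ (S ∩ T).card := hScov.2 T hT
    have h2 : S ∩ T = S :=
      eq_of_subset_of_card_le inter_subset_left (by rw [hScard]; exact h1)
    rw [← h2]
    exact inter_subset_right
  obtain ⟨T1, hT1, T2, hT2, hneT⟩ :=
    Finset.one_lt_card.1 (by omega : 1 < (TauSet n k t F).card)
  have hT1c : T1.card = t + 1 := ((hmem𝒯 T1).1 hT1).2.2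
  have hT2c : T2.card = t + 1 := ((hmem𝒯 T2).1 hT2).2.2
  obtain ⟨a, ha⟩ : ∃ a, T1 \ S = {a} :=
    card_eq_one.1 (by rw [card_sdiff_of_subset (hST T1 hT1), hT1c, hScard]; omega)
  obtain ⟨b, hb⟩ : ∃ b, T2 \ S = {b} :=
    card_eq_one.1 (by rw [card_sdiff_of_subset (hST T2 hT2), hT2c, hScard]; omega)
  have hT1e : T1 = insert a S := by
    have h := sdiff_union_of_subset (hST T1 hT1)
    rw [ha, ← insert_eq] at h
    exact h.symm
  have hT2e : T2 = insert b S := by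
    have h := sdiff_union_of_subset (hST T2 hT2)
    rw [hb, ← insert_eq] at h
    exact h.symm
  have haS : a ∉ S := (mem_sdiff.1 (ha ▸ mem_singleton_self a)).2
  have hbS : b ∉ S := (mem_sdiff.1 (hb ▸ mem_singleton_self b)).2
  have hab : a ≠ b := fun h => hneT (by rw [hT1e, hT2e, h])
  set X := insert a (insert b S) with hX
  have haX : a ∈ X := mem_insert_self _ _
  have hbX : b ∈ X := mem_insert_of_mem (mem_insert_self _ _)
  have hSX : S ⊆ X := fun p hp => mem_insert_of_mem (mem_insert_of_mem hp)
  have hXcard : X.card = t + 2 := by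
    rw [hX, card_insert_of_notMem (by simp [hab, haS]),
      card_insert_of_notMem hbS, hScard]
  have hT1X : T1 ⊆ X := by
    rw [hT1e]; exact insert_subset haX hSX
  have hT2X : T2 ⊆ X := by
    rw [hT2e]; exact insert_subset hbX hSX
  have hsupT1 : T1 ⊆ (TauSet n k t F).sup id := Finset.le_sup (f := id) hT1
  have hsupT2 : T2 ⊆ (TauSet n k t F).sup id := Finset.le_sup (f := id) hT2
  have hXM : X = (TauSet n k t F).sup id := by
    apply eq_of_subset_of_card_le
    · intro p hp
      rcases mem_insert.1 hp with rfl | hp'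
      · exact hsupT1 (by rw [hT1e]; exact mem_insert_self _ _)
      rcases mem_insert.1 hp' with rfl | hp''
      · exact hsupT2 (by rw [hT2e]; exact mem_insert_self _ _)
      · exact hsupT1 (by rw [hT1e]; exact mem_insert_of_mem hp'')
    · rw [hM, hXcard]
  have hcov1 : ∀ A ∈ F, t ≤ (T1 ∩ A).card := ((hmem𝒯 T1).1 hT1).2.1.2
  have hcov2 : ∀ A ∈ F, t ≤ (T2 ∩ A).card := ((hmem𝒯 T2).1 hT2).2.1.2
  have key1 : ∀ A ∈ F, (S ∩ A).card < t → a ∈ A ∧ b ∈ A := by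
    intro A hA hlt
    constructor
    · by_contra h
      have hsub : T1 ∩ A ⊆ S ∩ A := by
        intro p hp
        obtain ⟨hp1, hp2⟩ := mem_inter.1 hp
        rw [hT1e] at hp1
        rcases mem_insert.1 hp1 with rfl | hpS
        · exact absurd hp2 h
        · exact mem_inter.2 ⟨hpS, hp2⟩
      have h2 := card_le_card hsub
      have h3 := hcov1 A hA
      omega
    · by_contra h
      have hsub : T2 ∩ A ⊆ S ∩ A := by
        intro p hp
        obtain ⟨hp1, hp2⟩ := mem_inter.1 hp
        rw [hT2e] at hp1
        rcases mem_insert.1 hp1 with rfl | hpS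
        · exact absurd hp2 h
        · exact mem_inter.2 ⟨hpS, hp2⟩
      have h2 := card_le_card hsub
      have h3 := hcov2 A hA
      omega
  have key2 : ∀ A ∈ F, t - 1 ≤ (S ∩ A).card := by
    intro A hA
    have h1 := hcov1 A hA
    have hsub : T1 ∩ A ⊆ insert a (S ∩ A) := by
      intro p hp
      obtain ⟨hp1, hp2⟩ := mem_inter.1 hp
      rw [hT1e] at hp1
      rcases mem_insert.1 hp1 with rfl | hpS
      · exact mem_insert_self _ _
      · exact mem_insert_of_mem (mem_inter.2 ⟨hpS, hp2⟩)
    have h2 := card_le_card hsub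
    have h3 := card_insert_le a (S ∩ A)
    omega
  have hSnc : ¬ IsTCover n k t F S := fun h => by
    have := hmin S h
    omega
  have hex0 : ∃ A ∈ F, (S ∩ A).card < t := by
    by_contra h
    push_neg at h
    exact hSnc ⟨hScov.1, fun A hA => h A hA⟩
  obtain ⟨F0, hF0F, hF0lt⟩ := hex0
  have hF0card : F0.card = r := (mem_L.1 (hF.1 hF0F)).2.1
  obtain ⟨haF0, hbF0⟩ := key1 F0 hF0F hF0lt
  have hPcard : (F0 \ X).card ≤ r - t - 1 := by
    have h1 : insert b (T1 ∩ F0) ⊆ F0 ∩ X := by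
      intro p hp
      rcases mem_insert.1 hp with rfl | hp'
      · exact mem_inter.2 ⟨hbF0, hbX⟩
      · obtain ⟨h2, h3⟩ := mem_inter.1 hp'
        exact mem_inter.2 ⟨h3, hT1X h2⟩
    have hbT1 : b ∉ T1 := by
      rw [hT1e]
      simp only [mem_insert]
      push_neg
      exact ⟨fun h => hab h.symm, hbS⟩
    have h2 := card_le_card h1
    rw [card_insert_of_notMem (fun hc => hbT1 (mem_inter.1 hc).1)] at h2
    have h4 := hcov1 F0 hF0F
    have h3 := card_sdiff_add_card_inter F0 X
    omega
  have notin : ∀ Y : Finset (ℕ × ℕ), IsSigned n k Y → Y.card = t + 1 →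
      Y ∉ TauSet n k t F → ∃ A ∈ F, (Y ∩ A).card < t := by
    intro Y hsig hYc hY
    by_contra h
    push_neg at h
    exact hY ((hmem𝒯 Y).2 ⟨hsig.1, ⟨hsig, fun A hA => h A hA⟩, hYc⟩)
  let gC : ℕ × ℕ → Finset (ℕ × ℕ) := fun x =>
    if h : ∃ A ∈ F, ((insert x S) ∩ A).card < t then h.choose else ∅
  have hgC : ∀ x, (∃ A ∈ F, ((insert x S) ∩ A).card < t) →
      gC x ∈ F ∧ ((insert x S) ∩ gC x).card < t := by
    intro x h
    simp only [gC, dif_pos h]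
    exact ⟨h.choose_spec.1, h.choose_spec.2⟩
  let gD : ℕ × ℕ → Finset (ℕ × ℕ) := fun s0 =>
    if h : ∃ A ∈ F, ((insert a (insert b (S.erase s0))) ∩ A).card < t then h.choose else ∅
  have hgD : ∀ s0, (∃ A ∈ F, ((insert a (insert b (S.erase s0))) ∩ A).card < t) →
      gD s0 ∈ F ∧ ((insert a (insert b (S.erase s0))) ∩ gD s0).card < t := by
    intro s0 h
    simp only [gD, dif_pos h]
    exact ⟨h.choose_spec.1, h.choose_spec.2⟩
  set N2 := (n - (t + 2)).choose (r - (t + 2)) * k ^ (r - (t + 2)) with hN2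
  set A1 := (L n r k).filter (fun A => insert a S ⊆ A) with hA1def
  set A2 := (L n r k).filter (fun A => insert b S ⊆ A) with hA2def
  set UC := (F0 \ X).biUnion (fun x => ((gC x) \ insert x X).biUnion
    (fun y => (L n r k).filter (fun A => insert x (insert y S) ⊆ A))) with hUCdef
  set UD := S.biUnion (fun s0 => ((gD s0) \ X).biUnion
    (fun z => (L n r k).filter
      (fun A => insert z (insert a (insert b (S.erase s0))) ⊆ A))) with hUDdef
  have hsplit : F ⊆ A1 ∪ A2 ∪ UC ∪ UD := by
    intro A hA
    have hAL := hF.1 hA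
    by_cases hSA : S ⊆ A
    · by_cases haA : a ∈ A
      · exact mem_union_left _ (mem_union_left _ (mem_union_left _
          (mem_filter.2 ⟨hAL, insert_subset haA hSA⟩)))
      by_cases hbA : b ∈ A
      · exact mem_union_left _ (mem_union_left _ (mem_union_right _
          (mem_filter.2 ⟨hAL, insert_subset hbA hSA⟩)))
      · -- case C
        have hAXS : ∀ p, p ∈ A → p ∈ X → p ∈ S := by
          intro p hpA hpX
          rcases mem_insert.1 hpX with rfl | hp'
          · exact absurd hpA haA
          rcases mem_insert.1 hp' with rfl | hp''
          · exact absurd hpA hbA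
          · exact hp''
        have hint : t ≤ (A ∩ F0).card := hF.2.1 A hA F0 hF0F
        have hx : ∃ x, x ∈ (A ∩ F0) \ X := by
          by_contra h
          push_neg at h
          have hsub : A ∩ F0 ⊆ S ∩ F0 := by
            intro p hp
            have hpX : p ∈ X := by
              by_contra hc
              exact h p (mem_sdiff.2 ⟨hp, hc⟩)
            exact mem_inter.2 ⟨hAXS p (mem_inter.1 hp).1 hpX, (mem_inter.1 hp).2⟩
          have := card_le_card hsub
          omega
        obtain ⟨x, hx⟩ := hx
        obtain ⟨hxAF0, hxX⟩ := mem_sdiff.1 hx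
        obtain ⟨hxA, hxF0⟩ := mem_inter.1 hxAF0
        have hxS : x ∉ S := fun hc => hxX (hSX hc)
        have hxsub : insert x S ⊆ A := insert_subset hxA hSA
        have hsig := signed_subset hAL hxsub
        have hxc : (insert x S).card = t + 1 := by
          rw [card_insert_of_notMem hxS, hScard]
        have hnotmem : insert x S ∉ TauSet n k t F := by
          intro hmem
          have hsub2 : insert x S ⊆ X := by
            rw [hXM]
            exact Finset.le_sup (f := id) hmem
          exact hxX (hsub2 (mem_insert_self _ _))
        have hFx := hgC x (notin _ hsig hxc hnotmem)
        have hint2 : t ≤ (A ∩ gC x).card := hF.2.1 A hA (gC x) hFx.1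
        have hy : ∃ y, y ∈ (A ∩ gC x) \ insert x X := by
          by_contra h
          push_neg at h
          have hsub : A ∩ gC x ⊆ (insert x S) ∩ gC x := by
            intro p hp
            have hpX : p ∈ insert x X := by
              by_contra hc
              exact h p (mem_sdiff.2 ⟨hp, hc⟩)
            rcases mem_insert.1 hpX with rfl | hp'
            · exact mem_inter.2 ⟨mem_insert_self _ _, (mem_inter.1 hp).2⟩
            · exact mem_inter.2 ⟨mem_insert_of_mem
                (hAXS p (mem_inter.1 hp).1 hp'), (mem_inter.1 hp).2⟩
          have := card_le_card hsub
          have := hFx.2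
          omega
        obtain ⟨y, hy⟩ := hy
        obtain ⟨hyA, hyX⟩ := mem_sdiff.1 hy
        obtain ⟨hyA1, hyg⟩ := mem_inter.1 hyA
        refine mem_union_left _ (mem_union_right _ ?_)
        exact mem_biUnion.2 ⟨x, mem_sdiff.2 ⟨hxF0, hxX⟩,
          mem_biUnion.2 ⟨y, mem_sdiff.2 ⟨hyg, hyX⟩,
            mem_filter.2 ⟨hAL, insert_subset hxA (insert_subset hyA1 hSA)⟩⟩⟩
    · -- case D
      have hlt : (S ∩ A).card < t := by
        by_contra h
        push_neg at h
        have heq : S ∩ A = S :=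
          eq_of_subset_of_card_le inter_subset_left (by rw [hScard]; exact h)
        exact hSA (by rw [← heq]; exact inter_subset_right)
      obtain ⟨haA, hbA⟩ := key1 A hA hlt
      have hge := key2 A hA
      obtain ⟨s0, hs0S, hs0A⟩ : ∃ s0 ∈ S, s0 ∉ A := by
        by_contra h
        push_neg at h
        exact hSA h
      have hSAe : S ∩ A = S.erase s0 := by
        apply eq_of_subset_of_card_le
        · intro p hp
          obtain ⟨hp1, hp2⟩ := mem_inter.1 hp
          exact mem_erase.2 ⟨fun hc => hs0A (hc ▸ hp2), hp1⟩
        · rw [card_erase_of_mem hs0S, hScard]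
          omega
      have hBsA : insert a (insert b (S.erase s0)) ⊆ A :=
        insert_subset haA (insert_subset hbA
          (by rw [← hSAe]; exact inter_subset_right))
      have hsig := signed_subset hAL hBsA
      have hBscard : (insert a (insert b (S.erase s0))).card = t + 1 := by
        rw [card_insert_of_notMem, card_insert_of_notMem
          (fun hc => hbS (mem_of_mem_erase hc)), card_erase_of_mem hs0S, hScard]
        · omega
        · intro hc
          rcases mem_insert.1 hc with h1 | h1
          · exact hab h1
          · exact haS (mem_of_mem_erase h1)
      have hs0Bs : s0 ∉ insert a (insert b (S.erase s0)) := by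
        intro hc
        rcases mem_insert.1 hc with h1 | h1
        · exact hs0A (by rw [h1]; exact haA)
        rcases mem_insert.1 h1 with h2 | h2
        · exact hs0A (by rw [h2]; exact hbA)
        · exact (notMem_erase s0 S) h2
      have hnotmem : insert a (insert b (S.erase s0)) ∉ TauSet n k t F :=
        fun hmem => hs0Bs (hST _ hmem hs0S)
      have hF1 := hgD s0 (notin _ hsig hBscard hnotmem)
      have hint2 : t ≤ (A ∩ gD s0).card := hF.2.1 A hA _ hF1.1
      have hz : ∃ z, z ∈ (A ∩ gD s0) \ X := by
        by_contra h
        push_neg at h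
        have hsub : A ∩ gD s0 ⊆ (insert a (insert b (S.erase s0))) ∩ gD s0 := by
          intro p hp
          have hpX : p ∈ X := by
            by_contra hc
            exact h p (mem_sdiff.2 ⟨hp, hc⟩)
          obtain ⟨hpA, hpg⟩ := mem_inter.1 hp
          refine mem_inter.2 ⟨?_, hpg⟩
          rcases mem_insert.1 hpX with rfl | hp'
          · exact mem_insert_self _ _
          rcases mem_insert.1 hp' with rfl | hp''
          · exact mem_insert_of_mem (mem_insert_self _ _)
          · exact mem_insert_of_mem (mem_insert_of_mem
              (hSAe ▸ (mem_inter.2 ⟨hp'', hpA⟩ : p ∈ S ∩ A)))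
        have := card_le_card hsub
        have := hF1.2
        omega
      obtain ⟨z, hz⟩ := hz
      obtain ⟨hzA, hzX⟩ := mem_sdiff.1 hz
      obtain ⟨hzA1, hzg⟩ := mem_inter.1 hzA
      exact mem_union_right _ (mem_biUnion.2 ⟨s0, hs0S,
        mem_biUnion.2 ⟨z, mem_sdiff.2 ⟨hzg, hzX⟩,
          mem_filter.2 ⟨hAL, insert_subset hzA1 hBsA⟩⟩⟩)
  -- cardinality bounds
  have hA1b : A1.card ≤ (n - (t + 1)).choose (r - (t + 1)) * k ^ (r - (t + 1)) := by
    have h := countA n r k (insert a S)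
    rwa [card_insert_of_notMem haS, hScard] at h
  have hA2b : A2.card ≤ (n - (t + 1)).choose (r - (t + 1)) * k ^ (r - (t + 1)) := by
    have h := countA n r k (insert b S)
    rwa [card_insert_of_notMem hbS, hScard] at h
  have hfilterb : ∀ B : Finset (ℕ × ℕ), B.card = t + 2 →
      ((L n r k).filter (fun A => B ⊆ A)).card ≤ N2 := by
    intro B hB
    have h := countA n r k B
    rwa [hB] at h
  have hBsc : ∀ s0 ∈ S, (insert a (insert b (S.erase s0))).card = t + 1 := by
    intro s0 hs0S
    rw [card_insert_of_notMem, card_insert_of_notMem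
      (fun hc => hbS (mem_of_mem_erase hc)), card_erase_of_mem hs0S, hScard]
    · omega
    · intro hc
      rcases mem_insert.1 hc with h1 | h1
      · exact hab h1
      · exact haS (mem_of_mem_erase h1)
  have hgCr : ∀ x, ((gC x) \ insert x X).card ≤ r - t := by
    intro x
    by_cases h : ∃ A ∈ F, ((insert x S) ∩ A).card < t
    · obtain ⟨hmemF, _⟩ := hgC x h
      have hcr : (gC x).card = r := (mem_L.1 (hF.1 hmemF)).2.1
      have hT1sub : T1 ⊆ insert x X := hT1X.trans (subset_insert _ _)
      have h2 : t ≤ ((gC x) ∩ insert x X).card := by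
        refine le_trans (hcov1 _ hmemF) (card_le_card ?_)
        intro p hp
        exact mem_inter.2 ⟨(mem_inter.1 hp).2, hT1sub (mem_inter.1 hp).1⟩
      have h3 := card_sdiff_add_card_inter (gC x) (insert x X)
      omega
    · simp only [gC, dif_neg h]
      simp
  have hgDr : ∀ s0, ((gD s0) \ X).card ≤ r - t := by
    intro s0
    by_cases h : ∃ A ∈ F, ((insert a (insert b (S.erase s0))) ∩ A).card < t
    · obtain ⟨hmemF, _⟩ := hgD s0 h
      have hcr : (gD s0).card = r := (mem_L.1 (hF.1 hmemF)).2.1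
      have h2 : t ≤ ((gD s0) ∩ X).card := by
        refine le_trans (hcov1 _ hmemF) (card_le_card ?_)
        intro p hp
        exact mem_inter.2 ⟨(mem_inter.1 hp).2, hT1X (mem_inter.1 hp).1⟩
      have h3 := card_sdiff_add_card_inter (gD s0) X
      omega
    · simp only [gD, dif_neg h]
      simp
  have hUCb : UC.card ≤ (r - t - 1) * ((r - t) * N2) := by
    calc UC.card ≤ ∑ x ∈ F0 \ X, (((gC x) \ insert x X).biUnion
          (fun y => (L n r k).filter (fun A => insert x (insert y S) ⊆ A))).card :=
        card_biUnion_le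
      _ ≤ ∑ _x ∈ F0 \ X, (r - t) * N2 := by
          apply sum_le_sum
          intro x hx
          have hxX : x ∉ X := (mem_sdiff.1 hx).2
          have hxS : x ∉ S := fun hc => hxX (hSX hc)
          calc (((gC x) \ insert x X).biUnion
                (fun y => (L n r k).filter (fun A => insert x (insert y S) ⊆ A))).card
              ≤ ∑ y ∈ (gC x) \ insert x X,
                  ((L n r k).filter (fun A => insert x (insert y S) ⊆ A)).card :=
              card_biUnion_le
            _ ≤ ∑ _y ∈ (gC x) \ insert x X, N2 := by
                apply sum_le_sum
                intro y hy
                have hyX : y ∉ insert x X := (mem_sdiff.1 hy).2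
                have hyx : y ≠ x := fun hc => hyX (hc ▸ mem_insert_self _ _)
                have hyS : y ∉ S := fun hc => hyX (mem_insert_of_mem (hSX hc))
                apply hfilterb
                rw [card_insert_of_notMem, card_insert_of_notMem hyS, hScard]
                intro hc
                rcases mem_insert.1 hc with h1 | h1
                · exact hyx h1.symm
                · exact hxS h1
            _ = ((gC x) \ insert x X).card * N2 := by
                rw [sum_const, smul_eq_mul]
            _ ≤ (r - t) * N2 := Nat.mul_le_mul_right _ (hgCr x)
      _ = (F0 \ X).card * ((r - t) * N2) := by rw [sum_const, smul_eq_mul]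
      _ ≤ (r - t - 1) * ((r - t) * N2) := Nat.mul_le_mul_right _ hPcard
  have hUDb : UD.card ≤ t * ((r - t) * N2) := by
    calc UD.card ≤ ∑ s0 ∈ S, (((gD s0) \ X).biUnion
          (fun z => (L n r k).filter
            (fun A => insert z (insert a (insert b (S.erase s0))) ⊆ A))).card :=
        card_biUnion_le
      _ ≤ ∑ _s0 ∈ S, (r - t) * N2 := by
          apply sum_le_sum
          intro s0 hs0
          calc (((gD s0) \ X).biUnion
                (fun z => (L n r k).filter
                  (fun A => insert z (insert a (insert b (S.erase s0))) ⊆ A))).card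
              ≤ ∑ z ∈ (gD s0) \ X,
                  ((L n r k).filter
                    (fun A => insert z (insert a (insert b (S.erase s0))) ⊆ A)).card :=
              card_biUnion_le
            _ ≤ ∑ _z ∈ (gD s0) \ X, N2 := by
                apply sum_le_sum
                intro z hz
                have hzX : z ∉ X := (mem_sdiff.1 hz).2
                apply hfilterb
                rw [card_insert_of_notMem, hBsc s0 hs0]
                intro hc
                rcases mem_insert.1 hc with h1 | h1
                · exact hzX (h1 ▸ haX)
                rcases mem_insert.1 h1 with h2 | h2
                · exact hzX (h2 ▸ hbX)
                · exact hzX (hSX (mem_of_mem_erase h2))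
            _ = ((gD s0) \ X).card * N2 := by rw [sum_const, smul_eq_mul]
            _ ≤ (r - t) * N2 := Nat.mul_le_mul_right _ (hgDr s0)
      _ = S.card * ((r - t) * N2) := by rw [sum_const, smul_eq_mul]
      _ = t * ((r - t) * N2) := by rw [hScard]
  have htotal : F.card ≤ A1.card + A2.card + UC.card + UD.card := by
    have h1 : F.card ≤ (A1 ∪ A2 ∪ UC ∪ UD).card := card_le_card hsplit
    have h2 := card_union_le (A1 ∪ A2 ∪ UC) UD
    have h3 := card_union_le (A1 ∪ A2) UC
    have h4 := card_union_le A1 A2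
    omega
  set c1 := (n - t - 1).choose (r - t - 1) * k ^ (r - t - 1) with hc1
  set c2 := (n - t - 2).choose (r - t - 2) * k ^ (r - t - 2) with hc2
  have he1 : (n - (t + 1)).choose (r - (t + 1)) * k ^ (r - (t + 1)) = c1 := by
    rw [hc1, show n - (t + 1) = n - t - 1 from by omega,
      show r - (t + 1) = r - t - 1 from by omega]
  have he2 : N2 = c2 := by
    rw [hN2, hc2, show n - (t + 2) = n - t - 2 from by omega,
      show r - (t + 2) = r - t - 2 from by omega]
  have hco : (r - t - 1) * ((r - t) * c2) + t * ((r - t) * c2) ≤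
      (r - 1) * ((r - t + 1) * c2) := by
    have e1 : (r - t - 1) * ((r - t) * c2) + t * ((r - t) * c2) =
        ((r - t - 1) + t) * ((r - t) * c2) := by ring
    rw [e1, show (r - t - 1) + t = r - 1 from by omega]
    exact Nat.mul_le_mul_left _ (Nat.mul_le_mul_right _ (by omega))
  have hgoal : 2 * (n - t - 1).choose (r - t - 1) * k ^ (r - t - 1) +
      (r - 1) * (r - t + 1) * (n - t - 2).choose (r - t - 2) * k ^ (r - t - 2) =
      2 * c1 + (r - 1) * ((r - t + 1) * c2) := by
    rw [hc1, hc2]; ring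
  rw [hgoal]
  rw [he1] at hA1b hA2b
  rw [he2] at hUCb hUDb
  have h5 : A1.card + A2.card ≤ 2 * c1 := by omega
  have h6 : UC.card + UD.card ≤ (r - 1) * ((r - t + 1) * c2) :=
    le_trans (Nat.add_le_add hUCb hUDb) hco
  omega
end

section
/- Let $n,r,k,t$ be positive integers with $n\ge r\ge t+1$ and $k\ge2$. Suppose $\mathcal{F}\subset\mathcal{L}_{n,r,k}$ is a maximal $t$-intersecting family with $\tau_t(\mathcal{F})=t+1$, let $\mathcal{T}$ be the set of its $t$-covers of size $t+1$ with $|\mathcal{T}|\ge2$, suppose $\mathcal{T}$ has a $t$-cover of size $t$, and set $\ell=|\bigcup_{T\in\mathcal{T}}T|$ with $\ell\ge t+3$. Then $|\mathcal{F}|\le(\ell-t)\binom{n-t-1}{r-t-1}k^{r-t-1}+\big((r-\ell+1)(r-t+1)+t\big)\binom{n-t-2}{r-t-2}k^{r-t-2}$. -/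
open Finset

attribute [local instance] Classical.propDecidable

noncomputable def SC (k : ℕ) (Q : Finset ℕ) (s : ℕ) : Finset (Finset (ℕ × ℕ)) :=
  (Q ×ˢ Finset.Icc 1 k).powerset.filter (fun A => A.card = s ∧ Set.InjOn Prod.fst (A : Set (ℕ × ℕ)))

lemma SC_zero (k : ℕ) (Q : Finset ℕ) : (SC k Q 0).card ≤ 1 := by
  apply Finset.card_le_one.mpr
  intro a ha b hb
  simp only [SC, mem_filter] at ha hb
  rw [Finset.card_eq_zero.mp ha.2.1, Finset.card_eq_zero.mp hb.2.1]

lemma SC_bound (k : ℕ) (Q : Finset ℕ) (s : ℕ) :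
    (SC k Q s).card ≤ Q.card.choose s * k ^ s := by
  induction Q using Finset.induction_on generalizing s with
  | empty =>
    cases s with
    | zero => simpa using SC_zero k ∅
    | succ s =>
      have : SC k ∅ (s+1) = ∅ := by
        ext A
        simp only [SC, mem_filter, Finset.mem_powerset, Finset.notMem_empty, iff_false]
        rintro ⟨hsub, hc, -⟩
        simp at hsub
        subst hsub
        simp at hc
      simp [this]
  | @insert q Q hq ih =>
    cases s with
    | zero => exact le_trans (SC_zero k _) (by simp)
    | succ s =>
      -- split
      set I := Finset.Icc 1 k
      set P := Q ×ˢ I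
      have hsplit : SC k (insert q Q) (s+1) ⊆
          (SC k Q (s+1)) ∪ ((SC k (insert q Q) (s+1)).filter (fun A => ¬ A ⊆ P)) := by
        intro A hA
        by_cases h : A ⊆ P
        · apply Finset.mem_union_left
          simp only [SC, mem_filter, Finset.mem_powerset] at hA ⊢
          exact ⟨h, hA.2⟩
        · exact Finset.mem_union_right _ (by simp [mem_filter, hA, h])
      have hbad : ((SC k (insert q Q) (s+1)).filter (fun A => ¬ A ⊆ P)).card ≤
          k * (SC k Q s).card := by
        -- injection A ↦ (A \ P, A ∩ P) into T ×ˢ SC k Q s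
        classical
        set T : Finset (Finset (ℕ × ℕ)) := I.image (fun j => ({(q, j)} : Finset (ℕ × ℕ)))
        have hT : T.card ≤ k := le_trans (Finset.card_image_le) (by simp [I])
        have := Finset.card_le_card_of_injOn (f := fun A => (A \ P, A ∩ P))
          (s := (SC k (insert q Q) (s+1)).filter (fun A => ¬ A ⊆ P))
          (t := T ×ˢ SC k Q s) ?_ ?_
        · calc _ ≤ (T ×ˢ SC k Q s).card := this
            _ = T.card * (SC k Q s).card := Finset.card_product _ _
            _ ≤ k * (SC k Q s).card := Nat.mul_le_mul_right _ hT
        · intro A hA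
          simp only [Finset.mem_coe, mem_filter] at hA
          obtain ⟨hA, hnsub⟩ := hA
          simp only [SC, mem_filter, Finset.mem_powerset] at hA
          obtain ⟨hsub, hcard, hinj⟩ := hA
          -- A \ P is a singleton {(q,j)}
          obtain ⟨p, hp, hpP⟩ := Finset.not_subset.mp hnsub
          have hpq : p.1 = q := by
            have := hsub hp
            simp only [P, Finset.mem_product, Finset.mem_insert] at this hpP
            rcases this.1 with h | h
            · exact h
            · exact absurd ⟨h, this.2⟩ hpP
          have hsd : A \ P = {p} := by
            ext x
            simp only [Finset.mem_sdiff, Finset.mem_singleton]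
            constructor
            · rintro ⟨hxA, hxP⟩
              have hxq : x.1 = q := by
                have := hsub hxA
                simp only [P, Finset.mem_product, Finset.mem_insert] at this hxP
                rcases this.1 with h | h
                · exact h
                · exact absurd ⟨h, this.2⟩ hxP
              exact hinj hxA hp (by rw [hxq, hpq])
            · rintro rfl; exact ⟨hp, hpP⟩
          simp only [Finset.mem_coe, Finset.mem_product]
          constructor
          · simp only [T, Finset.mem_image]
            refine ⟨p.2, ?_, ?_⟩
            · have := hsub hp
              simp only [Finset.mem_product, Finset.mem_insert] at this
              exact this.2
            · rw [hsd, ← hpq]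
          · simp only [SC, mem_filter, Finset.mem_powerset]
            refine ⟨Finset.inter_subset_right, ?_, ?_⟩
            · have : A.card = (A \ P).card + (A ∩ P).card := (Finset.card_sdiff_add_card_inter A P).symm
              rw [hcard, hsd] at this
              have hc1 : ({p} : Finset (ℕ×ℕ)).card = 1 := Finset.card_singleton p
              omega
            · exact hinj.mono (by intro x hx; exact Finset.mem_coe.mpr (Finset.mem_inter.mp hx).1)
        · intro A hA B hB hAB
          have h1 : A \ P = B \ P := congrArg Prod.fst hAB
          have h2 : A ∩ P = B ∩ P := congrArg Prod.snd hAB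
          rw [← Finset.sdiff_union_inter A P, ← Finset.sdiff_union_inter B P, h1, h2]
      calc (SC k (insert q Q) (s+1)).card
          ≤ (SC k Q (s+1)).card + ((SC k (insert q Q) (s+1)).filter (fun A => ¬ A ⊆ P)).card :=
            le_trans (Finset.card_le_card hsplit) (Finset.card_union_le _ _)
        _ ≤ Q.card.choose (s+1) * k ^ (s+1) + k * (Q.card.choose s * k ^ s) :=
            Nat.add_le_add (ih (s+1)) (le_trans hbad (Nat.mul_le_mul_left _ (ih s)))
        _ = (Q.card.choose s + Q.card.choose (s+1)) * k ^ (s+1) := by ring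
        _ = (insert q Q).card.choose (s+1) * k ^ (s+1) := by
            rw [Finset.card_insert_of_notMem hq, Nat.choose_succ_succ']

lemma count_superset (n r k : ℕ) (B : Finset (ℕ × ℕ)) :
    ((L n r k).filter (fun A => B ⊆ A)).card ≤
      (n - B.card).choose (r - B.card) * k ^ (r - B.card) := by
  rcases Finset.eq_empty_or_nonempty ((L n r k).filter (fun A => B ⊆ A)) with h | h
  · simp [h]
  obtain ⟨A0, hA0⟩ := h
  simp only [mem_filter, L, Finset.mem_powerset] at hA0
  obtain ⟨⟨hA0box, hA0card, hA0fst⟩, hBA0⟩ := hA0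
  have hA0inj : Set.InjOn Prod.fst (A0 : Set (ℕ × ℕ)) := by
    rw [← Finset.card_image_iff]; rw [hA0fst, hA0card]
  have hBbox : B ⊆ box n k := hBA0.trans hA0box
  have hBinj : Set.InjOn Prod.fst (B : Set (ℕ × ℕ)) :=
    hA0inj.mono (by exact_mod_cast hBA0)
  have hBfst : (B.image Prod.fst).card = B.card := Finset.card_image_iff.mpr hBinj
  set Q : Finset ℕ := Finset.Icc 1 n \ B.image Prod.fst with hQ
  have hQcard : Q.card = n - B.card := by
    rw [hQ, Finset.card_sdiff_of_subset, hBfst, Nat.card_Icc]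
    · omega
    · intro a ha
      obtain ⟨p, hp, rfl⟩ := Finset.mem_image.mp ha
      have := hBbox hp
      simp only [_root_.box, Finset.mem_product] at this
      exact this.1
  have key : ∀ A ∈ (L n r k).filter (fun A => B ⊆ A), A \ B ∈ SC k Q (r - B.card) := by
    intro A hA
    simp only [mem_filter, L, Finset.mem_powerset] at hA
    obtain ⟨⟨hAbox, hAcard, hAfst⟩, hBA⟩ := hA
    have hAinj : Set.InjOn Prod.fst (A : Set (ℕ × ℕ)) := by
      rw [← Finset.card_image_iff]; rw [hAfst, hAcard]
    simp only [SC, mem_filter, Finset.mem_powerset]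
    refine ⟨?_, ?_, ?_⟩
    · intro x hx
      obtain ⟨hxA, hxB⟩ := Finset.mem_sdiff.mp hx
      have hxbox := hAbox hxA
      simp only [_root_.box, Finset.mem_product] at hxbox
      refine Finset.mem_product.mpr ⟨?_, hxbox.2⟩
      rw [hQ, Finset.mem_sdiff]
      refine ⟨hxbox.1, ?_⟩
      intro hmem
      obtain ⟨b, hb, hbx⟩ := Finset.mem_image.mp hmem
      exact hxB (hAinj (hBA hb) hxA hbx ▸ hb)
    · rw [Finset.card_sdiff_of_subset hBA, hAcard]
    · exact hAinj.mono (by intro x hx; exact Finset.mem_coe.mpr (Finset.mem_sdiff.mp hx).1)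
  calc ((L n r k).filter (fun A => B ⊆ A)).card
      ≤ (SC k Q (r - B.card)).card := by
        apply Finset.card_le_card_of_injOn (fun A => A \ B) key
        intro A hA A' hA' hEq
        have hA2 : B ⊆ A := (Finset.mem_filter.mp (Finset.mem_coe.mp hA)).2
        have hA'2 : B ⊆ A' := (Finset.mem_filter.mp (Finset.mem_coe.mp hA')).2
        rw [← Finset.sdiff_union_of_subset hA2, ← Finset.sdiff_union_of_subset hA'2]
        exact congrArg (· ∪ B) hEq
    _ ≤ Q.card.choose (r - B.card) * k ^ (r - B.card) := SC_bound k Q _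
    _ = (n - B.card).choose (r - B.card) * k ^ (r - B.card) := by rw [hQcard]

theorem bound_ell_large (n r k t l : ℕ) (hn : 0 < n) (ht : 0 < t)
    (hk : 2 ≤ k) (htr : t + 1 ≤ r) (hrn : r ≤ n)
    (F : Finset (Finset (ℕ × ℕ))) (hF : IsMaximalTIntersecting n r k t F)
    (hex : ∃ T, IsTCover n k t F T ∧ T.card = t + 1)
    (hmin : ∀ T, IsTCover n k t F T → t + 1 ≤ T.card)
    (hcard : 2 ≤ (TauSet n k t F).card)
    (hS : ∃ S, IsTCover n k t (TauSet n k t F) S ∧ S.card = t)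
    (hl : ((TauSet n k t F).sup id).card = l) (hl3 : t + 3 ≤ l) :
    F.card ≤ (l - t) * (n - t - 1).choose (r - t - 1) * k ^ (r - t - 1) +
      ((r - l + 1) * (r - t + 1) + t) * (n - t - 2).choose (r - t - 2) * k ^ (r - t - 2) := by
  obtain ⟨S, ⟨hSsigned, hScov⟩, hScard⟩ := hS
  obtain ⟨hFL, hFint, -⟩ := hF
  set 𝒯 := TauSet n k t F with h𝒯def
  set U := 𝒯.sup id with hUdef
  -- members of F are in L
  have hmemL : ∀ A ∈ F, A ⊆ box n k ∧ A.card = r ∧ Set.InjOn Prod.fst (A : Set (ℕ × ℕ)) := by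
    intro A hA
    have := hFL hA
    simp only [L, mem_filter, Finset.mem_powerset] at this
    refine ⟨this.1, this.2.1, ?_⟩
    rw [← Finset.card_image_iff, this.2.2, this.2.1]
  -- every T in TauSet contains S
  have hST : ∀ T ∈ 𝒯, S ⊆ T := by
    intro T hT
    have h1 : t ≤ (S ∩ T).card := hScov T hT
    have h2 : S ∩ T ⊆ S := Finset.inter_subset_left
    have := Finset.eq_of_subset_of_card_le h2 (by rw [hScard]; exact h1)
    exact this ▸ Finset.inter_subset_right
  have h𝒯ne : 𝒯.Nonempty := Finset.card_pos.mp (by omega)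
  have hSU : S ⊆ U := (hST _ h𝒯ne.choose_spec).trans (Finset.le_sup (f := id) h𝒯ne.choose_spec)
  set E := U \ S with hEdef
  have hEcard : E.card = l - t := by
    rw [hEdef, Finset.card_sdiff_of_subset hSU, hl, hScard]
  have hSE : Disjoint S E := Finset.disjoint_sdiff
  have hSEU : S ∪ E = U := by rw [hEdef]; exact Finset.union_sdiff_of_subset hSU
  -- each e in E gives a cover (insert e S)
  have hTE : ∀ e ∈ E, insert e S ∈ 𝒯 := by
    intro e he
    obtain ⟨heU, heS⟩ := Finset.mem_sdiff.mp he
    obtain ⟨T, hT, heT⟩ := Finset.mem_sup.mp heU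
    have hSsubT : S ⊆ T := hST T hT
    have hTcard : T.card = t + 1 := by
      have := (Finset.mem_filter.mp hT).2.2; exact this
    have : insert e S ⊆ T := Finset.insert_subset heT hSsubT
    have hieq : insert e S = T := Finset.eq_of_subset_of_card_le this
      (by rw [hTcard, Finset.card_insert_of_notMem heS, hScard])
    rwa [hieq]
  -- cover property of insert e S
  have hcov : ∀ A ∈ F, ∀ e ∈ E, t ≤ ((insert e S) ∩ A).card := by
    intro A hA e he
    have := (Finset.mem_filter.mp (hTE e he)).2.1.2 A hA
    exact this
  have hEne : E.Nonempty := Finset.card_pos.mp (by omega)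
  -- every A in F meets S in ≥ t-1 points
  have hAS : ∀ A ∈ F, t - 1 ≤ (S ∩ A).card := by
    intro A hA
    obtain ⟨e, he⟩ := hEne
    have h1 := hcov A hA e he
    have h2 : (insert e S) ∩ A ⊆ insert e (S ∩ A) := by
      intro x hx
      obtain ⟨hx1, hx2⟩ := Finset.mem_inter.mp hx
      rcases Finset.mem_insert.mp hx1 with rfl | hxS
      · exact Finset.mem_insert_self _ _
      · exact Finset.mem_insert_of_mem (Finset.mem_inter.mpr ⟨hxS, hx2⟩)
    have h3 := Finset.card_le_card h2
    have h4 := Finset.card_insert_le e (S ∩ A)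
    omega
  -- case analysis for A not containing S
  have hAcase : ∀ A ∈ F, ¬ S ⊆ A → (S ∩ A).card = t - 1 ∧ E ⊆ A := by
    intro A hA hnS
    have h1 : (S ∩ A).card ≤ t := by
      have := Finset.card_le_card (Finset.inter_subset_left : S ∩ A ⊆ S)
      omega
    have h2 : (S ∩ A).card ≠ t := by
      intro h
      have := Finset.eq_of_subset_of_card_le (Finset.inter_subset_left : S ∩ A ⊆ S)
        (by rw [hScard, h])
      exact hnS (this ▸ Finset.inter_subset_right)
    have h3 : (S ∩ A).card = t - 1 := by have := hAS A hA; omega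
    refine ⟨h3, ?_⟩
    intro e he
    by_contra heA
    have h4 := hcov A hA e he
    have h5 : (insert e S) ∩ A = S ∩ A := by
      ext x
      simp only [Finset.mem_inter, Finset.mem_insert]
      constructor
      · rintro ⟨rfl | hxS, hxA⟩
        · exact absurd hxA heA
        · exact ⟨hxS, hxA⟩
      · rintro ⟨hxS, hxA⟩; exact ⟨Or.inr hxS, hxA⟩
    rw [h5, h3] at h4
    omega
  -- exists A0 with small intersection with S
  have hA0ex : ∃ A0 ∈ F, ¬ S ⊆ A0 := by
    by_contra h
    push_neg at h
    have : IsTCover n k t F S := by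
      refine ⟨hSsigned, ?_⟩
      intro A hA
      have := h A hA
      rw [Finset.inter_eq_left.mpr this, hScard]
    have := hmin S this
    omega
  obtain ⟨A0, hA0F, hA0nS⟩ := hA0ex
  obtain ⟨hA0SC, hEA0⟩ := hAcase A0 hA0F hA0nS
  obtain ⟨hA0box, hA0card, hA0inj⟩ := hmemL A0 hA0F
  set X := A0 \ (S ∪ E) with hXdef
  have hXcard : X.card ≤ r - l + 1 := by
    have h1 : A0 ∩ (S ∪ E) = (S ∩ A0) ∪ E := by
      ext x
      simp only [Finset.mem_inter, Finset.mem_union]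
      constructor
      · rintro ⟨hxA, hxS | hxE⟩
        · exact Or.inl ⟨hxS, hxA⟩
        · exact Or.inr hxE
      · rintro (⟨hxS, hxA⟩ | hxE)
        · exact ⟨hxA, Or.inl hxS⟩
        · exact ⟨hEA0 hxE, Or.inr hxE⟩
    have h2 : ((S ∩ A0) ∪ E).card = (t - 1) + (l - t) := by
      rw [Finset.card_union_of_disjoint, hA0SC, hEcard]
      exact Finset.disjoint_of_subset_left Finset.inter_subset_left hSE
    have h3 : X.card + (A0 ∩ (S ∪ E)).card = A0.card := Finset.card_sdiff_add_card_inter A0 (S ∪ E)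
    rw [h1, h2, hA0card] at h3
    omega
  -- the three subfamilies
  classical
  set C1 : ℕ := (n - t - 1).choose (r - t - 1) * k ^ (r - t - 1) with hC1
  set C2 : ℕ := (n - t - 2).choose (r - t - 2) * k ^ (r - t - 2) with hC2
  have hsub1 : n - t - 1 = n - (t + 1) := by omega
  have hsub2 : r - t - 1 = r - (t + 1) := by omega
  have hsub3 : n - t - 2 = n - (t + 2) := by omega
  have hsub4 : r - t - 2 = r - (t + 2) := by omega
  set F2 := F.filter (fun A => ¬ S ⊆ A) with hF2def
  set F1a := F.filter (fun A => S ⊆ A ∧ (A ∩ E).Nonempty) with hF1adef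
  set F1b := F.filter (fun A => S ⊆ A ∧ ¬ (A ∩ E).Nonempty) with hF1bdef
  have hpart : F.card ≤ F1a.card + F1b.card + F2.card := by
    have hsub : F ⊆ (F1a ∪ F1b) ∪ F2 := by
      intro A hA
      by_cases h1 : S ⊆ A
      · by_cases h2 : (A ∩ E).Nonempty
        · exact Finset.mem_union_left _ (Finset.mem_union_left _
            (Finset.mem_filter.mpr ⟨hA, h1, h2⟩))
        · exact Finset.mem_union_left _ (Finset.mem_union_right _
            (Finset.mem_filter.mpr ⟨hA, h1, h2⟩))
      · exact Finset.mem_union_right _ (Finset.mem_filter.mpr ⟨hA, h1⟩)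
    calc F.card ≤ ((F1a ∪ F1b) ∪ F2).card := Finset.card_le_card hsub
      _ ≤ (F1a ∪ F1b).card + F2.card := Finset.card_union_le _ _
      _ ≤ F1a.card + F1b.card + F2.card := by
          have := Finset.card_union_le F1a F1b; omega
  -- bound on F1a
  have hb1a : F1a.card ≤ (l - t) * C1 := by
    have hsub : F1a ⊆ E.biUnion (fun e => (L n r k).filter (fun A => insert e S ⊆ A)) := by
      intro A hA
      obtain ⟨hAF, hSA, e, he⟩ := Finset.mem_filter.mp hA
      obtain ⟨heA, heE⟩ := Finset.mem_inter.mp he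
      exact Finset.mem_biUnion.mpr ⟨e, heE,
        Finset.mem_filter.mpr ⟨hFL hAF, Finset.insert_subset heA hSA⟩⟩
    have hterm : ∀ e ∈ E, ((L n r k).filter (fun A => insert e S ⊆ A)).card ≤ C1 := by
      intro e he
      have heS : e ∉ S := (Finset.mem_sdiff.mp he).2
      have hc : (insert e S).card = t + 1 := by
        rw [Finset.card_insert_of_notMem heS, hScard]
      have := count_superset n r k (insert e S)
      rw [hc] at this
      rwa [hC1, hsub1, hsub2]
    calc F1a.card ≤ (E.biUnion (fun e => (L n r k).filter (fun A => insert e S ⊆ A))).card :=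
          Finset.card_le_card hsub
      _ ≤ ∑ e ∈ E, ((L n r k).filter (fun A => insert e S ⊆ A)).card := Finset.card_biUnion_le
      _ ≤ E.card • C1 := Finset.sum_le_card_nsmul _ _ _ hterm
      _ = (l - t) * C1 := by rw [smul_eq_mul, hEcard]
  -- bound on F2
  obtain ⟨E3, hE3sub, hE3card⟩ := Finset.exists_subset_card_eq (show 3 ≤ E.card by omega)
  have hb2 : F2.card ≤ t * C2 := by
    have hsub : F2 ⊆ (S.powersetCard (t - 1)).biUnion
        (fun C => (L n r k).filter (fun A => C ∪ E3 ⊆ A)) := by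
      intro A hA
      obtain ⟨hAF, hnS⟩ := Finset.mem_filter.mp hA
      obtain ⟨hSAc, hEA⟩ := hAcase A hAF hnS
      refine Finset.mem_biUnion.mpr ⟨S ∩ A, ?_, ?_⟩
      · exact Finset.mem_powersetCard.mpr ⟨Finset.inter_subset_left, hSAc⟩
      · refine Finset.mem_filter.mpr ⟨hFL hAF, Finset.union_subset
          Finset.inter_subset_right (hE3sub.trans hEA)⟩
    have hterm : ∀ C ∈ S.powersetCard (t - 1),
        ((L n r k).filter (fun A => C ∪ E3 ⊆ A)).card ≤ C2 := by
      intro C hC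
      obtain ⟨hCS, hCcard⟩ := Finset.mem_powersetCard.mp hC
      have hdisj : Disjoint C E3 := Finset.disjoint_of_subset_left hCS
        (Finset.disjoint_of_subset_right hE3sub hSE)
      have hc : (C ∪ E3).card = t + 2 := by
        rw [Finset.card_union_of_disjoint hdisj, hCcard, hE3card]; omega
      have := count_superset n r k (C ∪ E3)
      rw [hc] at this
      rwa [hC2, hsub3, hsub4]
    have hpc : (S.powersetCard (t - 1)).card = t := by
      rw [Finset.card_powersetCard, hScard]
      have h1 : t - (t - 1) = 1 := by omega
      have := Nat.choose_symm (show t - 1 ≤ t by omega)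
      rw [h1, Nat.choose_one_right] at this
      omega
    calc F2.card ≤ ((S.powersetCard (t - 1)).biUnion
          (fun C => (L n r k).filter (fun A => C ∪ E3 ⊆ A))).card := Finset.card_le_card hsub
      _ ≤ ∑ C ∈ S.powersetCard (t - 1), ((L n r k).filter (fun A => C ∪ E3 ⊆ A)).card :=
          Finset.card_biUnion_le
      _ ≤ (S.powersetCard (t - 1)).card • C2 := Finset.sum_le_card_nsmul _ _ _ hterm
      _ = t * C2 := by rw [smul_eq_mul, hpc]
  -- bound on F1b
  set Y : ℕ × ℕ → Finset (ℕ × ℕ) := fun x =>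
    if h : ∃ A1 ∈ F, ((insert x S) ∩ A1).card < t
    then h.choose \ (insert x S) else ∅ with hYdef
  have hYcard : ∀ x, (Y x).card ≤ r - t + 1 := by
    intro x
    simp only [hYdef]
    by_cases h : ∃ A1 ∈ F, ((insert x S) ∩ A1).card < t
    · rw [dif_pos h]
      obtain ⟨hA1F, hA1small⟩ := h.choose_spec
      set A1 := h.choose
      have hA1card : A1.card = r := (hmemL A1 hA1F).2.1
      have h1 : (A1 \ insert x S).card + (A1 ∩ insert x S).card = A1.card :=
        Finset.card_sdiff_add_card_inter A1 (insert x S)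
      have h2 : t - 1 ≤ (A1 ∩ insert x S).card := by
        have hs : S ∩ A1 ⊆ A1 ∩ insert x S := by
          intro p hp
          obtain ⟨hpS, hpA⟩ := Finset.mem_inter.mp hp
          exact Finset.mem_inter.mpr ⟨hpA, Finset.mem_insert_of_mem hpS⟩
        have := Finset.card_le_card hs
        have := hAS A1 hA1F
        omega
      omega
    · rw [dif_neg h]; simp
  have hYnotin : ∀ x, ∀ y ∈ Y x, y ∉ insert x S := by
    intro x y hy
    simp only [hYdef] at hy
    by_cases h : ∃ A1 ∈ F, ((insert x S) ∩ A1).card < t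
    · rw [dif_pos h] at hy
      exact (Finset.mem_sdiff.mp hy).2
    · rw [dif_neg h] at hy; exact absurd hy (Finset.notMem_empty y)
  have hcover : F1b ⊆ X.biUnion (fun x => (Y x).biUnion
      (fun y => (L n r k).filter (fun A => insert x (insert y S) ⊆ A))) := by
    intro A hA
    obtain ⟨hAF, hSA, hAEne⟩ := Finset.mem_filter.mp hA
    have hAE : A ∩ E = ∅ := Finset.not_nonempty_iff_eq_empty.mp hAEne
    -- find x ∈ A ∩ X
    have hint0 : t ≤ (A ∩ A0).card := hFint A hAF A0 hA0F
    have hsplit : A ∩ A0 ⊆ (S ∩ A0) ∪ (A ∩ X) := by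
      intro p hp
      obtain ⟨hpA, hpA0⟩ := Finset.mem_inter.mp hp
      by_cases hpS : p ∈ S
      · exact Finset.mem_union_left _ (Finset.mem_inter.mpr ⟨hpS, hpA0⟩)
      · have hpE : p ∉ E := by
          intro hpE
          have : p ∈ A ∩ E := Finset.mem_inter.mpr ⟨hpA, hpE⟩
          rw [hAE] at this
          exact Finset.notMem_empty p this
        have hpX : p ∈ X := Finset.mem_sdiff.mpr ⟨hpA0, by
          intro hc
          rcases Finset.mem_union.mp hc with h | h
          exacts [hpS h, hpE h]⟩
        exact Finset.mem_union_right _ (Finset.mem_inter.mpr ⟨hpA, hpX⟩)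
    have hxex : (A ∩ X).Nonempty := by
      rw [← Finset.card_pos]
      have h1 := Finset.card_le_card hsplit
      have h2 := Finset.card_union_le (S ∩ A0) (A ∩ X)
      have h3 : (S ∩ A0).card = t - 1 := hA0SC
      omega
    obtain ⟨x, hx⟩ := hxex
    obtain ⟨hxA, hxX⟩ := Finset.mem_inter.mp hx
    have hxSU : x ∉ S ∪ E := (Finset.mem_sdiff.mp hxX).2
    -- insert x S is not a t-cover
    have hxh : ∃ A1 ∈ F, ((insert x S) ∩ A1).card < t := by
      by_contra hc
      push_neg at hc
      obtain ⟨hAbox, hAcard, hAinj⟩ := hmemL A hAF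
      have hsubA : insert x S ⊆ A := Finset.insert_subset hxA hSA
      have hxnS : x ∉ S := fun hs => hxSU (Finset.mem_union_left _ hs)
      have hsigned : IsSigned n k (insert x S) := by
        refine ⟨hsubA.trans hAbox, ?_⟩
        apply Finset.card_image_iff.mpr
        exact hAinj.mono (by exact_mod_cast hsubA)
      have hmemTau : insert x S ∈ 𝒯 := by
        rw [h𝒯def]
        refine Finset.mem_filter.mpr ⟨Finset.mem_powerset.mpr (hsubA.trans hAbox),
          ⟨hsigned, hc⟩, ?_⟩
        rw [Finset.card_insert_of_notMem hxnS, hScard]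
      have hxU : x ∈ U := by
        have : insert x S ⊆ U := Finset.le_sup (f := id) hmemTau
        exact this (Finset.mem_insert_self x S)
      rw [← hSEU] at hxU
      exact hxSU hxU
    obtain ⟨hA1F, hA1small⟩ := hxh.choose_spec
    set A1 := hxh.choose
    have hYx : Y x = A1 \ insert x S := by simp only [hYdef]; exact dif_pos hxh
    -- find y ∈ A ∩ Y x
    have hint1 : t ≤ (A ∩ A1).card := hFint A hAF A1 hA1F
    have hsplit1 : A ∩ A1 ⊆ ((insert x S) ∩ A1) ∪ (A ∩ Y x) := by
      intro p hp
      obtain ⟨hpA, hpA1⟩ := Finset.mem_inter.mp hp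
      by_cases hpS : p ∈ insert x S
      · exact Finset.mem_union_left _ (Finset.mem_inter.mpr ⟨hpS, hpA1⟩)
      · refine Finset.mem_union_right _ (Finset.mem_inter.mpr ⟨hpA, ?_⟩)
        rw [hYx]
        exact Finset.mem_sdiff.mpr ⟨hpA1, hpS⟩
    have hyex : (A ∩ Y x).Nonempty := by
      rw [← Finset.card_pos]
      have h1 := Finset.card_le_card hsplit1
      have h2 := Finset.card_union_le ((insert x S) ∩ A1) (A ∩ Y x)
      omega
    obtain ⟨y, hy⟩ := hyex
    obtain ⟨hyA, hyY⟩ := Finset.mem_inter.mp hy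
    refine Finset.mem_biUnion.mpr ⟨x, hxX, Finset.mem_biUnion.mpr ⟨y, hyY,
      Finset.mem_filter.mpr ⟨hFL hAF, ?_⟩⟩⟩
    exact Finset.insert_subset hxA (Finset.insert_subset hyA hSA)
  have hb1b : F1b.card ≤ (r - l + 1) * ((r - t + 1) * C2) := by
    have hterm : ∀ x ∈ X, ∀ y ∈ Y x,
        ((L n r k).filter (fun A => insert x (insert y S) ⊆ A)).card ≤ C2 := by
      intro x hxX y hyY
      have hynS : y ∉ insert x S := hYnotin x y hyY
      have hxnS : x ∉ S := by
        have := (Finset.mem_sdiff.mp hxX).2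
        exact fun hs => this (Finset.mem_union_left _ hs)
      have hxy : x ∉ insert y S := by
        intro hc
        rcases Finset.mem_insert.mp hc with rfl | h
        · exact hynS (Finset.mem_insert_self _ _)
        · exact hxnS h
      have hc : (insert x (insert y S)).card = t + 2 := by
        rw [Finset.card_insert_of_notMem hxy, Finset.card_insert_of_notMem
          (fun hs => hynS (Finset.mem_insert_of_mem hs)), hScard]
      have := count_superset n r k (insert x (insert y S))
      rw [hc] at this
      rwa [hC2, hsub3, hsub4]
    have hinner : ∀ x ∈ X, ((Y x).biUnion
        (fun y => (L n r k).filter (fun A => insert x (insert y S) ⊆ A))).card ≤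
        (r - t + 1) * C2 := by
      intro x hx
      calc ((Y x).biUnion _).card
          ≤ ∑ y ∈ Y x, ((L n r k).filter (fun A => insert x (insert y S) ⊆ A)).card :=
            Finset.card_biUnion_le
        _ ≤ (Y x).card • C2 := Finset.sum_le_card_nsmul _ _ _ (fun y hy => hterm x hx y hy)
        _ ≤ (r - t + 1) * C2 := by
            rw [smul_eq_mul]
            exact Nat.mul_le_mul_right _ (hYcard x)
    calc F1b.card ≤ (X.biUnion (fun x => (Y x).biUnion
          (fun y => (L n r k).filter (fun A => insert x (insert y S) ⊆ A)))).card :=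
          Finset.card_le_card hcover
      _ ≤ ∑ x ∈ X, ((Y x).biUnion
          (fun y => (L n r k).filter (fun A => insert x (insert y S) ⊆ A))).card :=
          Finset.card_biUnion_le
      _ ≤ X.card • ((r - t + 1) * C2) := Finset.sum_le_card_nsmul _ _ _ hinner
      _ ≤ (r - l + 1) * ((r - t + 1) * C2) := by
          rw [smul_eq_mul]
          exact Nat.mul_le_mul_right _ hXcard
  -- combine
  have : F.card ≤ (l - t) * C1 + ((r - l + 1) * ((r - t + 1) * C2) + t * C2) := by omega
  calc F.card ≤ (l - t) * C1 + ((r - l + 1) * ((r - t + 1) * C2) + t * C2) := this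
    _ = (l - t) * (n - t - 1).choose (r - t - 1) * k ^ (r - t - 1) +
      ((r - l + 1) * (r - t + 1) + t) * (n - t - 2).choose (r - t - 2) * k ^ (r - t - 2) := by
        rw [hC1, hC2]; ring
end
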